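/- arXiv:math/9811157 — 2 statements merged into one kernel-verified Lean document; each statement's English description precedes it below -/
import Mathlib

section
/- Let A_m ⊆ Ω_{n_m} be a sequence of events with lim_{m→∞} II(A_m) = 0. Then {A_m} is asymptotically noise sensitive: for every ε ∈ (0,1/2), lim_{m→∞} φ(A_m, ε) = 0. -/
namespace BKS

open Finset Filter

variable {ι : Type} [Fintype ι] [DecidableEq ι]

/-- Probability of an event under the uniform measure on `ι → Bool`. -/
noncomputable def cprob (A : Finset (ι → Bool)) : ℝ :=
  (A.card : ℝ) / 2 ^ Fintype.card ι

/-- Expectation of a function under the uniform measure on `ι → Bool`. -/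
noncomputable def cexpect (f : (ι → Bool) → ℝ) : ℝ :=
  (∑ x : ι → Bool, f x) / 2 ^ Fintype.card ι

/-- Real-valued indicator of an event. -/
noncomputable def indE (A : Finset (ι → Bool)) : (ι → Bool) → ℝ :=
  fun x => if x ∈ A then 1 else 0

/-- Transition kernel of the ε-noise: probability that `N_ε(x) = y`. -/
noncomputable def noiseKernel (ε : ℝ) (x y : ι → Bool) : ℝ :=
  ∏ j : ι, if y j = x j then 1 - ε else ε

/-- `P(N_ε(x) ∈ A | x)`. -/
noncomputable def condProb (ε : ℝ) (A : Finset (ι → Bool)) (x : ι → Bool) : ℝ :=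
  ∑ y ∈ A, noiseKernel ε x y

/-- Sensitivity gauge φ(A, ε) = inf{δ > 0 : P{x : |P(N_ε(x) ∈ A | x) − P(A)| > δ} < δ}. -/
noncomputable def gauge (ε : ℝ) (A : Finset (ι → Bool)) : ℝ :=
  sInf {δ : ℝ | 0 < δ ∧
    cprob (@Finset.filter _ (fun x => δ < |condProb ε A x - cprob A|)
      (Classical.decPred _) Finset.univ) < δ}

/-- Flip the `k`-th bit. -/
def flipBit (k : ι) (x : ι → Bool) : ι → Bool := Function.update x k (!x k)

/-- Influence of the `k`-th variable: `I_k(f) = E|f(σ_k x) − f(x)|`. -/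
noncomputable def influence (k : ι) (f : (ι → Bool) → ℝ) : ℝ :=
  cexpect fun x => |f (flipBit k x) - f x|

/-- `I(f) = Σ_k I_k(f)`. -/
noncomputable def totalInf (f : (ι → Bool) → ℝ) : ℝ := ∑ k : ι, influence k f

/-- `II(f) = Σ_k I_k(f)²`. -/
noncomputable def sqInf (f : (ι → Bool) → ℝ) : ℝ := ∑ k : ι, (influence k f) ^ 2

/-- `II(A)` for an event `A`. -/
noncomputable def sqInfE (A : Finset (ι → Bool)) : ℝ := sqInf (indE A)

/-- A monotone (upward closed) event. -/
def MonotoneEvent (A : Finset (ι → Bool)) : Prop :=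
  ∀ x y : ι → Bool, (∀ j, x j ≤ y j) → x ∈ A → y ∈ A

/-- Fourier–Walsh coefficient `f̂(S) = E[f · u_S]`, where `u_S(x) = (−1)^{|S ∩ x|}`. -/
noncomputable def walshFourier (f : (ι → Bool) → ℝ) (S : Finset ι) : ℝ :=
  cexpect fun x => f x * (-1 : ℝ) ^ (S.filter fun j => x j = true).card

/-- `Q_ε f (x) = E[f(N_ε(x))]`. -/
noncomputable def Qop (ε : ℝ) (f : (ι → Bool) → ℝ) (x : ι → Bool) : ℝ :=
  ∑ y : ι → Bool, noiseKernel ε x y * f y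

/-- `VAR(f, ε)`: variance of `x ↦ E[f(N_ε(x)) | x]`. -/
noncomputable def VAR (ε : ℝ) (f : (ι → Bool) → ℝ) : ℝ :=
  cexpect fun x => (Qop ε f x - cexpect (Qop ε f)) ^ 2

/-- `P[A △ N_ε A]`. -/
noncomputable def probSymmDiff (ε : ℝ) (A : Finset (ι → Bool)) : ℝ :=
  cexpect fun x => ∑ y : ι → Bool, noiseKernel ε x y *
    (if (x ∈ A) ↔ (y ∈ A) then 0 else 1)

/-- `P[A \ N_ε A]`. -/
noncomputable def probOffDiff (ε : ℝ) (A : Finset (ι → Bool)) : ℝ :=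
  cexpect fun x => ∑ y : ι → Bool, noiseKernel ε x y *
    (if x ∈ A ∧ y ∉ A then 1 else 0)

/-- Majority function on the set `K`: `M_K(x) = sign(Σ_{j∈K}(2x_j − 1))`. -/
noncomputable def majority (K : Finset ι) (x : ι → Bool) : ℝ :=
  Real.sign (∑ j ∈ K, (2 * (if x j then (1:ℝ) else 0) - 1))

/-- Weighted majority function `M_w(x) = sign(Σ_j (2x_j − 1) w_j)`. -/
noncomputable def wMajority (w : ι → ℝ) (x : ι → Bool) : ℝ :=
  Real.sign (∑ j : ι, (2 * (if x j then (1:ℝ) else 0) - 1) * w j)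

/-- The discrete cube Ω_n = {0,1}^n. -/
abbrev Cube (n : ℕ) := Fin n → Bool
section Stage1
variable {N : ℕ}

/-- sign of a bit as a real: `true ↦ -1`, `false ↦ 1`. -/
noncomputable def bsign (b : Bool) : ℝ := if b then -1 else 1

/-- Walsh character. -/
noncomputable def chi (S : Finset (Fin N)) (x : Cube N) : ℝ := ∏ j ∈ S, bsign (x j)

/-- Function with prescribed Fourier coefficients. -/
noncomputable def coefF (c : Finset (Fin N) → ℝ) : Cube N → ℝ :=
  fun x => ∑ S : Finset (Fin N), c S * chi S x

lemma coefF_apply (c : Finset (Fin N) → ℝ) (x : Cube N) :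
    coefF c x = ∑ S : Finset (Fin N), c S * chi S x := rfl

lemma two_pow_pos' : (0:ℝ) < 2 ^ N := by positivity

lemma cexpect_def' (f : Cube N → ℝ) : cexpect f = (∑ x : Cube N, f x) / 2 ^ N := by
  simp [cexpect, Fintype.card_fin]

lemma cexpect_sum {κ : Type*} (s : Finset κ) (F : κ → Cube N → ℝ) :
    cexpect (fun x => ∑ k ∈ s, F k x) = ∑ k ∈ s, cexpect (F k) := by
  simp only [cexpect_def', ← Finset.sum_div]
  rw [Finset.sum_comm]

lemma cexpect_const_mul (c : ℝ) (f : Cube N → ℝ) :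
    cexpect (fun x => c * f x) = c * cexpect f := by
  simp only [cexpect_def', ← Finset.mul_sum, mul_div_assoc]

lemma cexpect_mono {f g : Cube N → ℝ} (h : ∀ x, f x ≤ g x) : cexpect f ≤ cexpect g := by
  simp only [cexpect_def']
  exact div_le_div_of_nonneg_right (Finset.sum_le_sum fun x _ => h x) two_pow_pos'.le

lemma cexpect_nonneg {f : Cube N → ℝ} (h : ∀ x, 0 ≤ f x) : 0 ≤ cexpect f := by
  have := cexpect_mono (f := fun _ => (0:ℝ)) (g := f) h
  simpa [cexpect_def'] using this

lemma abs_cexpect_le (f : Cube N → ℝ) : |cexpect f| ≤ cexpect (fun x => |f x|) := by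
  simp only [cexpect_def', abs_div]
  rw [abs_of_pos (two_pow_pos' (N := N))]
  exact div_le_div_of_nonneg_right (Finset.abs_sum_le_sum_abs _ _) two_pow_pos'.le

lemma bsign_mul_self (b : Bool) : bsign b * bsign b = 1 := by cases b <;> simp [bsign]

lemma chi_empty (x : Cube N) : chi (∅ : Finset (Fin N)) x = 1 := by simp [chi]

lemma chi_eq_walsh (S : Finset (Fin N)) (x : Cube N) :
    chi S x = (-1 : ℝ) ^ (S.filter fun j => x j = true).card := by
  rw [chi, ← Finset.prod_filter_mul_prod_filter_not S (fun j => x j = true)]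
  have h1 : ∀ j ∈ S.filter (fun j => x j = true), bsign (x j) = -1 := by
    intro j hj; simp only [Finset.mem_filter] at hj; simp [bsign, hj.2]
  have h2 : ∀ j ∈ S.filter (fun j => ¬ x j = true), bsign (x j) = 1 := by
    intro j hj; simp only [Finset.mem_filter] at hj
    simp [bsign, Bool.not_eq_true] at hj ⊢; simp [hj.2]
  rw [Finset.prod_congr rfl h1, Finset.prod_congr rfl h2, Finset.prod_const, Finset.prod_const,
    one_pow, mul_one]

lemma walshFourier_eq (f : Cube N → ℝ) (S : Finset (Fin N)) :
    walshFourier f S = cexpect (fun x => f x * chi S x) := by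
  unfold walshFourier
  congr 1; funext x; rw [chi_eq_walsh]

/-- key orthogonality computation -/
lemma sum_chi_mul_chi (S T : Finset (Fin N)) :
    ∑ x : Cube N, chi S x * chi T x = if S = T then (2:ℝ) ^ N else 0 := by
  have hrw : ∀ x : Cube N, chi S x * chi T x
      = ∏ j : Fin N, ((if j ∈ S then bsign (x j) else 1) * (if j ∈ T then bsign (x j) else 1)) := by
    intro x
    rw [Finset.prod_mul_distrib]
    congr 1
    · rw [Finset.prod_ite_mem, Finset.univ_inter]; rfl
    · rw [Finset.prod_ite_mem, Finset.univ_inter]; rfl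
  simp only [hrw]
  have key := Finset.prod_univ_sum (fun _ : Fin N => (Finset.univ : Finset Bool))
    (fun j b => (if j ∈ S then bsign b else 1) * (if j ∈ T then bsign b else 1))
  rw [Fintype.piFinset_univ] at key
  rw [← key]
  have hfac : ∀ j : Fin N, (∑ b : Bool, ((if j ∈ S then bsign b else 1) * (if j ∈ T then bsign b else 1)))
      = if (j ∈ S ↔ j ∈ T) then 2 else 0 := by
    intro j
    rw [Fintype.sum_bool]
    by_cases hS : j ∈ S <;> by_cases hT : j ∈ T <;> simp [bsign, hS, hT] <;> norm_num
  rw [Finset.prod_congr rfl (fun j _ => hfac j)]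
  by_cases h : S = T
  · subst h
    simp [Finset.prod_const]
  · rw [if_neg h]
    have : ∃ j, ¬ (j ∈ S ↔ j ∈ T) := by
      by_contra hc
      push_neg at hc
      exact h (Finset.ext fun j => hc j)
    obtain ⟨j, hj⟩ := this
    exact Finset.prod_eq_zero (Finset.mem_univ j) (by rw [if_neg hj])

lemma cexpect_chi_mul_chi (S T : Finset (Fin N)) :
    cexpect (fun x => chi S x * chi T x) = if S = T then 1 else 0 := by
  rw [cexpect_def', sum_chi_mul_chi]
  split <;> simp [ne_of_gt (two_pow_pos' (N := N))]

lemma sum_chi_chi_point (x y : Cube N) :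
    ∑ S : Finset (Fin N), chi S x * chi S y = if y = x then (2:ℝ) ^ N else 0 := by
  have hrw : ∀ S : Finset (Fin N), chi S x * chi S y = ∏ j ∈ S, (bsign (x j) * bsign (y j)) := by
    intro S; rw [chi, chi, Finset.prod_mul_distrib]
  simp only [hrw]
  have := Finset.prod_add (fun j : Fin N => bsign (x j) * bsign (y j)) (fun _ => (1:ℝ)) Finset.univ
  simp only [Finset.prod_const_one, mul_one] at this
  rw [← Finset.powerset_univ, ← this]
  have hfac : ∀ j : Fin N, bsign (x j) * bsign (y j) + 1 = if x j = y j then 2 else 0 := by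
    intro j; cases hxj : x j <;> cases hyj : y j <;> simp [bsign] <;> norm_num
  rw [Finset.prod_congr rfl (fun j _ => hfac j)]
  by_cases h : y = x
  · subst h; simp [Finset.prod_const]
  · rw [if_neg h]
    have : ∃ j, ¬ x j = y j := by
      by_contra hc; push_neg at hc; exact h (funext fun j => (hc j).symm)
    obtain ⟨j, hj⟩ := this
    exact Finset.prod_eq_zero (Finset.mem_univ j) (by rw [if_neg hj])

/-- Fourier expansion. -/
lemma expansion (f : Cube N → ℝ) (x : Cube N) :
    f x = ∑ S : Finset (Fin N), walshFourier f S * chi S x := by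
  symm
  calc ∑ S : Finset (Fin N), walshFourier f S * chi S x
      = ∑ S : Finset (Fin N), (∑ y : Cube N, f y * chi S y * chi S x) / 2 ^ N := by
        refine Finset.sum_congr rfl fun S _ => ?_
        rw [walshFourier_eq, cexpect_def', div_mul_eq_mul_div, Finset.sum_mul]
    _ = (∑ S : Finset (Fin N), ∑ y : Cube N, f y * chi S y * chi S x) / 2 ^ N := by
        rw [Finset.sum_div]
    _ = (∑ y : Cube N, ∑ S : Finset (Fin N), f y * chi S y * chi S x) / 2 ^ N := by
        rw [Finset.sum_comm]
    _ = (∑ y : Cube N, f y * ∑ S : Finset (Fin N), chi S y * chi S x) / 2 ^ N := by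
        congr 1
        refine Finset.sum_congr rfl fun y _ => ?_
        rw [Finset.mul_sum]
        exact Finset.sum_congr rfl fun S _ => by ring
    _ = f x := by
        simp only [sum_chi_chi_point, mul_ite, mul_zero]
        rw [Finset.sum_ite_eq Finset.univ x (fun y => f y * (2:ℝ)^N)]
        simp [ne_of_gt (two_pow_pos' (N := N))]

lemma cexpect_coefF_mul_chi (c : Finset (Fin N) → ℝ) (S : Finset (Fin N)) :
    cexpect (fun x => coefF c x * chi S x) = c S := by
  have hrw : (fun x => coefF c x * chi S x)
      = fun x => ∑ T : Finset (Fin N), c T * (chi T x * chi S x) := by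
    funext x; rw [coefF_apply, Finset.sum_mul]
    exact Finset.sum_congr rfl fun T _ => by ring
  rw [hrw, cexpect_sum]
  simp only [cexpect_const_mul, cexpect_chi_mul_chi]
  simp

lemma walshFourier_coefF (c : Finset (Fin N) → ℝ) (S : Finset (Fin N)) :
    walshFourier (coefF c) S = c S := by
  rw [walshFourier_eq, cexpect_coefF_mul_chi]

/-- Plancherel for coefficient functions. -/
lemma cexpect_coefF_mul (c c' : Finset (Fin N) → ℝ) :
    cexpect (fun x => coefF c x * coefF c' x) = ∑ S : Finset (Fin N), c S * c' S := by
  have hrw : (fun x => coefF c x * coefF c' x)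
      = fun x => ∑ T : Finset (Fin N), c' T * (coefF c x * chi T x) := by
    funext x; rw [coefF_apply c', Finset.mul_sum]
    exact Finset.sum_congr rfl fun T _ => by ring
  rw [hrw, cexpect_sum]
  simp only [cexpect_const_mul, cexpect_coefF_mul_chi]
  congr 1; funext S; ring

/-- `f` equals `coefF` of its Fourier coefficients. -/
lemma coefF_walshFourier (f : Cube N → ℝ) : coefF (walshFourier f) = f := by
  funext x; rw [coefF_apply, ← expansion]

/-- Plancherel. -/
lemma cexpect_mul_eq_sum (f g : Cube N → ℝ) :
    cexpect (fun x => f x * g x) = ∑ S : Finset (Fin N), walshFourier f S * walshFourier g S := by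
  conv_lhs => rw [← coefF_walshFourier f, ← coefF_walshFourier g]
  rw [cexpect_coefF_mul]

end Stage1
section Stage2
variable {N : ℕ}

lemma chi_eq_prod_univ (S : Finset (Fin N)) (x : Cube N) :
    chi S x = ∏ j : Fin N, (if j ∈ S then bsign (x j) else 1) := by
  rw [Finset.prod_ite_mem, Finset.univ_inter, chi]

lemma sum_kernel_chi (ε : ℝ) (x : Cube N) (S : Finset (Fin N)) :
    ∑ y : Cube N, noiseKernel ε x y * chi S y = (1 - 2*ε) ^ S.card * chi S x := by
  have hrw : ∀ y : Cube N, noiseKernel ε x y * chi S y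
      = ∏ j : Fin N, ((if y j = x j then 1 - ε else ε) * (if j ∈ S then bsign (y j) else 1)) := by
    intro y
    rw [Finset.prod_mul_distrib, noiseKernel, ← chi_eq_prod_univ]
  simp only [hrw]
  have key := Finset.prod_univ_sum (fun _ : Fin N => (Finset.univ : Finset Bool))
    (fun j b => (if b = x j then 1 - ε else ε) * (if j ∈ S then bsign b else 1))
  rw [Fintype.piFinset_univ] at key
  rw [← key]
  have hfac : ∀ j : Fin N,
      (∑ b : Bool, (if b = x j then 1 - ε else ε) * (if j ∈ S then bsign b else 1))
      = if j ∈ S then (1 - 2*ε) * bsign (x j) else 1 := by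
    intro j
    rw [Fintype.sum_bool]
    by_cases hS : j ∈ S <;> cases hxj : x j <;> simp [bsign, hxj, hS] <;> ring
  rw [Finset.prod_congr rfl (fun j _ => hfac j)]
  rw [Finset.prod_ite_mem, Finset.univ_inter, Finset.prod_mul_distrib, Finset.prod_const, chi]

lemma Qop_coef (ε : ℝ) (f : Cube N → ℝ) :
    Qop ε f = coefF (fun S => (1 - 2*ε) ^ S.card * walshFourier f S) := by
  funext x
  rw [Qop, coefF_apply]
  calc ∑ y : Cube N, noiseKernel ε x y * f y
      = ∑ y : Cube N, ∑ S : Finset (Fin N),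
          walshFourier f S * (noiseKernel ε x y * chi S y) := by
        refine Finset.sum_congr rfl fun y _ => ?_
        conv_lhs => rw [expansion f y]
        rw [Finset.mul_sum]
        exact Finset.sum_congr rfl fun S _ => by ring
    _ = ∑ S : Finset (Fin N), walshFourier f S *
          (∑ y : Cube N, noiseKernel ε x y * chi S y) := by
        rw [Finset.sum_comm]
        exact Finset.sum_congr rfl fun S _ => by rw [Finset.mul_sum]
    _ = ∑ S : Finset (Fin N), (1 - 2*ε) ^ S.card * walshFourier f S * chi S x := by
        refine Finset.sum_congr rfl fun S _ => ?_
        rw [sum_kernel_chi]; ring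

lemma condProb_eq (ε : ℝ) (A : Finset (Cube N)) (x : Cube N) :
    condProb ε A x = Qop ε (indE A) x := by
  rw [condProb, Qop]
  have h : ∀ y : Cube N, noiseKernel ε x y * indE A y
      = if y ∈ A then noiseKernel ε x y else 0 := by
    intro y; by_cases hy : y ∈ A <;> simp [indE, hy]
  simp only [h]
  rw [Finset.sum_ite_mem, Finset.univ_inter]

lemma cprob_eq_cexpect (A : Finset (Cube N)) : cprob A = cexpect (indE A) := by
  rw [cprob, cexpect_def', Fintype.card_fin]
  congr 1
  simp only [indE]
  rw [Finset.sum_boole, Finset.filter_univ_mem]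

lemma cprob_eq_coef (A : Finset (Cube N)) : cprob A = walshFourier (indE A) ∅ := by
  rw [walshFourier_eq, cprob_eq_cexpect]
  congr 1; funext x; simp [chi_empty]

lemma condProb_sub_coef (ε : ℝ) (A : Finset (Cube N)) :
    (fun x => condProb ε A x - cprob A)
    = coefF (fun S => if S = ∅ then 0 else (1 - 2*ε) ^ S.card * walshFourier (indE A) S) := by
  funext x
  rw [condProb_eq, Qop_coef, coefF_apply, coefF_apply, cprob_eq_coef]
  have hsplit : ∀ S : Finset (Fin N),
      (if S = ∅ then 0 else (1 - 2*ε) ^ S.card * walshFourier (indE A) S) * chi S x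
      = (1 - 2*ε) ^ S.card * walshFourier (indE A) S * chi S x
        - (if S = ∅ then (1 - 2*ε) ^ S.card * walshFourier (indE A) S * chi S x else 0) := by
    intro S; by_cases hS : S = ∅ <;> simp [hS]
  simp only [hsplit]
  rw [Finset.sum_sub_distrib]
  rw [Finset.sum_ite_eq' Finset.univ (∅ : Finset (Fin N))
    (fun S => (1 - 2*ε) ^ S.card * walshFourier (indE A) S * chi S x)]
  simp [chi_empty]

/-- the second moment of `condProb - cprob`. -/
lemma secondMoment (ε : ℝ) (A : Finset (Cube N)) :
    cexpect (fun x => (condProb ε A x - cprob A)^2)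
    = ∑ S : Finset (Fin N),
        (if S = ∅ then 0 else ((1 - 2*ε)^2) ^ S.card * (walshFourier (indE A) S)^2) := by
  have h : (fun x => (condProb ε A x - cprob A)^2)
      = fun x => (coefF (fun S => if S = ∅ then 0 else (1 - 2*ε) ^ S.card
          * walshFourier (indE A) S) x
        * coefF (fun S => if S = ∅ then 0 else (1 - 2*ε) ^ S.card
          * walshFourier (indE A) S) x) := by
    funext x
    rw [← condProb_sub_coef]; ring
  rw [h, cexpect_coefF_mul]
  refine Finset.sum_congr rfl fun S _ => ?_
  by_cases hS : S = ∅
  · simp [hS]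
  · simp only [if_neg hS]
    rw [← pow_mul]; ring

lemma flipBit_invol (i : Fin N) (x : Cube N) : flipBit i (flipBit i x) = x := by
  funext j
  by_cases hj : j = i
  · subst hj; simp [flipBit]
  · simp [flipBit, Function.update_of_ne hj]

lemma flipBit_apply_self (i : Fin N) (x : Cube N) : flipBit i x i = !x i := by
  simp [flipBit]

lemma flipBit_apply_ne (i j : Fin N) (x : Cube N) (h : j ≠ i) : flipBit i x j = x j := by
  simp [flipBit, Function.update_of_ne h]

lemma cexpect_comp_flip (i : Fin N) (h : Cube N → ℝ) :
    cexpect (fun x => h (flipBit i x)) = cexpect h := by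
  rw [cexpect_def', cexpect_def']
  congr 1
  exact Function.Bijective.sum_comp
    (Function.Involutive.bijective (flipBit_invol i)) h

lemma bsign_not (b : Bool) : bsign (!b) = - bsign b := by cases b <;> simp [bsign]

lemma chi_flipBit (i : Fin N) (S : Finset (Fin N)) (x : Cube N) :
    chi S (flipBit i x) = (if i ∈ S then -1 else 1) * chi S x := by
  by_cases hi : i ∈ S
  · rw [if_pos hi, chi, chi, ← Finset.prod_erase_mul _ _ hi, ← Finset.prod_erase_mul _ _ hi]
    rw [Finset.prod_congr rfl (fun j hj => by
      rw [flipBit_apply_ne i j x (Finset.ne_of_mem_erase hj)])]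
    rw [flipBit_apply_self, bsign_not]
    ring
  · rw [if_neg hi, one_mul, chi, chi]
    refine Finset.prod_congr rfl fun j hj => ?_
    rw [flipBit_apply_ne i j x (fun hji => hi (hji ▸ hj))]

lemma walshFourier_comp_flip (f : Cube N → ℝ) (i : Fin N) (S : Finset (Fin N)) :
    walshFourier (fun x => f (flipBit i x)) S = (if i ∈ S then -1 else 1) * walshFourier f S := by
  rw [walshFourier_eq, walshFourier_eq]
  rw [← cexpect_const_mul]
  rw [← cexpect_comp_flip i
    (fun x => (if i ∈ S then (-1:ℝ) else 1) * (f x * chi S x))]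
  congr 1
  funext x
  rw [chi_flipBit]
  by_cases hi : i ∈ S <;> simp [hi] <;> ring

lemma deriv_coef (f : Cube N → ℝ) (i : Fin N) :
    (fun x => f (flipBit i x) - f x)
      = coefF (fun S => if i ∈ S then (-2) * walshFourier f S else 0) := by
  funext x
  rw [coefF_apply]
  conv_lhs => rw [expansion (fun x => f (flipBit i x)) x, expansion f x]
  rw [← Finset.sum_sub_distrib]
  refine Finset.sum_congr rfl fun S _ => ?_
  rw [walshFourier_comp_flip]
  by_cases hi : i ∈ S
  · rw [if_pos hi, if_pos hi]; ring
  · rw [if_neg hi, if_neg hi]; ring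

/-- influence of a Boolean function as second moment of the discrete derivative. -/
lemma influence_indE_sq (i : Fin N) (A : Finset (Cube N)) :
    influence i (indE A) = cexpect (fun x => (indE A (flipBit i x) - indE A x)^2) := by
  rw [influence]
  congr 1; funext x
  by_cases h1 : flipBit i x ∈ A <;> by_cases h2 : x ∈ A <;> simp [indE, h1, h2] <;> norm_num

lemma influence_indE_fourier (i : Fin N) (A : Finset (Cube N)) :
    influence i (indE A)
      = ∑ S : Finset (Fin N), (if i ∈ S then 4 * (walshFourier (indE A) S)^2 else 0) := by
  rw [influence_indE_sq]
  have h : (fun x => (indE A (flipBit i x) - indE A x)^2)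
      = fun x => (coefF (fun S => if i ∈ S then (-2) * walshFourier (indE A) S else 0) x
        * coefF (fun S => if i ∈ S then (-2) * walshFourier (indE A) S else 0) x) := by
    funext x; rw [← deriv_coef]; ring
  rw [h, cexpect_coefF_mul]
  refine Finset.sum_congr rfl fun S _ => ?_
  by_cases hi : i ∈ S <;> simp [hi] <;> ring

/-- Averaging over the coordinates outside `U`. -/
noncomputable def avg (U : Finset (Fin N)) (f : Cube N → ℝ) : Cube N → ℝ :=
  fun x => cexpect (fun y => f (fun j => if j ∈ U then x j else y j))

lemma cexpect_chi (T : Finset (Fin N)) :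
    cexpect (chi T) = if T = ∅ then 1 else 0 := by
  have h := cexpect_chi_mul_chi T (∅ : Finset (Fin N))
  simp only [chi_empty, mul_one] at h
  rw [show cexpect (chi T) = cexpect fun x => chi T x from rfl, h]

lemma chi_combine (S U : Finset (Fin N)) (x y : Cube N) :
    chi S (fun j => if j ∈ U then x j else y j)
      = chi (S.filter (· ∈ U)) x * chi (S.filter (· ∉ U)) y := by
  rw [chi, ← Finset.prod_filter_mul_prod_filter_not S (· ∈ U), chi, chi]
  congr 1
  · refine Finset.prod_congr rfl fun j hj => ?_
    rw [Finset.mem_filter] at hj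
    rw [if_pos hj.2]
  · refine Finset.prod_congr rfl fun j hj => ?_
    rw [Finset.mem_filter] at hj
    rw [if_neg hj.2]

lemma avg_coef (U : Finset (Fin N)) (f : Cube N → ℝ) :
    avg U f = coefF (fun S => if S ⊆ U then walshFourier f S else 0) := by
  funext x
  rw [avg, coefF_apply]
  calc cexpect (fun y => f (fun j => if j ∈ U then x j else y j))
      = cexpect (fun y => ∑ S : Finset (Fin N),
          (walshFourier f S * chi (S.filter (· ∈ U)) x) * chi (S.filter (· ∉ U)) y) := by
        congr 1; funext y
        conv_lhs => rw [expansion f (fun j => if j ∈ U then x j else y j)]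
        refine Finset.sum_congr rfl fun S _ => ?_
        rw [chi_combine]; ring
    _ = ∑ S : Finset (Fin N),
          (walshFourier f S * chi (S.filter (· ∈ U)) x)
            * (if S.filter (· ∉ U) = ∅ then 1 else 0) := by
        rw [cexpect_sum]
        refine Finset.sum_congr rfl fun S _ => ?_
        rw [cexpect_const_mul, cexpect_chi]
    _ = ∑ S : Finset (Fin N), (if S ⊆ U then walshFourier f S else 0) * chi S x := by
        refine Finset.sum_congr rfl fun S _ => ?_
        by_cases hsub : S ⊆ U
        · have hf1 : S.filter (· ∈ U) = S := Finset.filter_true_of_mem (fun j hj => hsub hj)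
          have hf2 : S.filter (· ∉ U) = ∅ :=
            Finset.filter_false_of_mem (fun j hj => not_not_intro (hsub hj))
          rw [hf1, hf2, if_pos rfl, if_pos hsub]; ring
        · have hne : ¬ S.filter (· ∉ U) = ∅ := by
            obtain ⟨j, hj, hju⟩ := Finset.not_subset.mp hsub
            intro hemp
            have hmem : j ∈ S.filter (· ∉ U) := Finset.mem_filter.mpr ⟨hj, hju⟩
            rw [hemp] at hmem
            exact absurd hmem (Finset.notMem_empty j)
          rw [if_neg hne, if_neg hsub]; ring

lemma cexpect_avg (U : Finset (Fin N)) (f : Cube N → ℝ) :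
    cexpect (avg U f) = cexpect f := by
  have h1 : cexpect (avg U f) = walshFourier (avg U f) ∅ := by
    rw [walshFourier_eq]; congr 1; funext x; simp [chi_empty]
  have h2 : cexpect f = walshFourier f ∅ := by
    rw [walshFourier_eq]; congr 1; funext x; simp [chi_empty]
  rw [h1, h2, avg_coef, walshFourier_coefF, if_pos (Finset.empty_subset U)]

end Stage2
section Stage3
variable {N : ℕ}

lemma cexpect_const (a : ℝ) : cexpect (fun _ : Cube N => a) = a := by
  rw [cexpect_def', Finset.sum_const, Finset.card_univ]
  have hcard : Fintype.card (Cube N) = 2 ^ N := by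
    rw [show Fintype.card (Cube N) = Fintype.card Bool ^ Fintype.card (Fin N) from
      Fintype.card_fun]
    simp [Fintype.card_fin]
  rw [hcard, nsmul_eq_mul]
  push_cast
  field_simp

lemma cexpect_add (f g : Cube N → ℝ) :
    cexpect (fun x => f x + g x) = cexpect f + cexpect g := by
  simp only [cexpect_def']
  rw [Finset.sum_add_distrib, add_div]

lemma coefF_smul (a : ℝ) (d : Finset (Fin N) → ℝ) (x : Cube N) :
    coefF (fun S => a * d S) x = a * coefF d x := by
  rw [coefF_apply, coefF_apply, Finset.mul_sum]
  exact Finset.sum_congr rfl fun S _ => by ring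

/-- reindex sums over sets containing `i` by insertion. -/
lemma sum_insert_reindex (i : Fin N) (G : Finset (Fin N) → ℝ) :
    ∑ S ∈ Finset.univ.filter (fun S : Finset (Fin N) => i ∈ S), G S
      = ∑ S ∈ Finset.univ.filter (fun S : Finset (Fin N) => i ∉ S), G (insert i S) := by
  refine Finset.sum_nbij' (fun S => S.erase i) (fun S => insert i S) ?_ ?_ ?_ ?_ ?_
  · intro S hS
    simp only [Finset.mem_filter, Finset.mem_univ, true_and] at *
    exact Finset.notMem_erase i S
  · intro S hS
    simp only [Finset.mem_filter, Finset.mem_univ, true_and] at *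
    exact Finset.mem_insert_self i S
  · intro S hS
    simp only [Finset.mem_filter, Finset.mem_univ, true_and] at hS
    exact Finset.insert_erase hS
  · intro S hS
    simp only [Finset.mem_filter, Finset.mem_univ, true_and] at hS
    exact Finset.erase_insert hS
  · intro S hS
    simp only [Finset.mem_filter, Finset.mem_univ, true_and] at hS
    rw [Finset.insert_erase hS]

/-- decomposition of a function supported on `insert i t` along the `i`-th coordinate. -/
lemma coefF_split (i : Fin N) (t : Finset (Fin N)) (hit : i ∉ t)
    (c : Finset (Fin N) → ℝ) (hsupp : ∀ S, ¬ S ⊆ insert i t → c S = 0) (x : Cube N) :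
    coefF c x = coefF (fun S => if S ⊆ t then c S else 0) x
      + bsign (x i) * coefF (fun S => if S ⊆ t then c (insert i S) else 0) x := by
  rw [coefF_apply]
  rw [← Finset.sum_filter_add_sum_filter_not Finset.univ (fun S => i ∈ S)
    (fun S => c S * chi S x)]
  have h1 : ∑ S ∈ Finset.univ.filter (fun S : Finset (Fin N) => ¬ i ∈ S), c S * chi S x
      = coefF (fun S => if S ⊆ t then c S else 0) x := by
    rw [coefF_apply, Finset.sum_filter]
    refine Finset.sum_congr rfl fun S _ => ?_
    by_cases hiS : i ∈ S
    · have hnsub : ¬ S ⊆ t := fun hsub => hit (hsub hiS)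
      simp [hiS, hnsub]
    · by_cases hsub : S ⊆ t
      · simp [hiS, hsub]
      · have hni : ¬ S ⊆ insert i t := by
          rw [Finset.subset_insert_iff_of_notMem hiS]; exact hsub
        simp [hiS, hsub, hsupp S hni]
  have h2 : ∑ S ∈ Finset.univ.filter (fun S : Finset (Fin N) => i ∈ S), c S * chi S x
      = bsign (x i) * coefF (fun S => if S ⊆ t then c (insert i S) else 0) x := by
    rw [sum_insert_reindex i (fun S => c S * chi S x), coefF_apply, Finset.mul_sum]
    rw [← Finset.sum_filter_add_sum_filter_not Finset.univ (fun S => i ∉ S)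
      (fun S => bsign (x i) * ((if S ⊆ t then c (insert i S) else 0) * chi S x))]
    have hz : ∑ S ∈ Finset.univ.filter (fun S : Finset (Fin N) => ¬ i ∉ S),
        bsign (x i) * ((if S ⊆ t then c (insert i S) else 0) * chi S x) = 0 := by
      refine Finset.sum_eq_zero fun S hS => ?_
      simp only [Finset.mem_filter, Finset.mem_univ, true_and, not_not] at hS
      have : ¬ S ⊆ t := fun hsub => hit (hsub hS)
      rw [if_neg this, zero_mul, mul_zero]
    rw [hz, add_zero]
    refine Finset.sum_congr rfl fun S hS => ?_
    simp only [Finset.mem_filter, Finset.mem_univ, true_and] at hS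
    have hchi : chi (insert i S) x = bsign (x i) * chi S x := by
      rw [chi, Finset.prod_insert hS, chi]
    by_cases hsub : S ⊆ t
    · rw [if_pos hsub, hchi]; ring
    · have hni : ¬ insert i S ⊆ insert i t := by
        intro hins
        exact hsub fun j hj => by
          rcases Finset.mem_insert.mp (hins (Finset.mem_insert_of_mem hj)) with h | h
          · exact absurd (h ▸ hj) hS
          · exact h
      rw [hsupp _ hni, if_neg hsub, zero_mul, zero_mul, mul_zero]
  rw [h1, h2]
  ring

/-- splitting of squared Fourier mass along coordinate `i`. -/
lemma mass_split (i : Fin N) (t : Finset (Fin N)) (hit : i ∉ t)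
    (c : Finset (Fin N) → ℝ) (hc : ∀ S, ¬ S ⊆ insert i t → c S = 0) :
    (∑ S : Finset (Fin N), ((if S ⊆ t then c (insert i S) else 0))^2)
      + (∑ S : Finset (Fin N), ((if S ⊆ t then c S else 0))^2)
    = ∑ S : Finset (Fin N), (c S)^2 := by
  rw [← Finset.sum_filter_add_sum_filter_not Finset.univ (fun S => i ∈ S)
    (fun S => (c S)^2)]
  rw [sum_insert_reindex i (fun S => (c S)^2)]
  congr 1
  · rw [Finset.sum_filter]
    refine Finset.sum_congr rfl fun S _ => ?_
    by_cases hiS : i ∈ S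
    · have hnsub : ¬ S ⊆ t := fun hsub => hit (hsub hiS)
      rw [if_neg hnsub, if_neg (by simpa using hiS)]
      norm_num
    · by_cases hsub : S ⊆ t
      · rw [if_pos hsub, if_pos hiS]
      · have hni : ¬ insert i S ⊆ insert i t := by
          intro hins
          exact hsub fun j hj => by
            rcases Finset.mem_insert.mp (hins (Finset.mem_insert_of_mem hj)) with h | h
            · exact absurd (h ▸ hj) hiS
            · exact h
        rw [if_neg hsub, hc _ hni, if_pos hiS]
  · rw [Finset.sum_filter]
    refine Finset.sum_congr rfl fun S _ => ?_
    by_cases hiS : i ∈ S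
    · have hnsub : ¬ S ⊆ t := fun hsub => hit (hsub hiS)
      rw [if_neg hnsub, if_neg (by simpa using hiS)]
      norm_num
    · by_cases hsub : S ⊆ t
      · rw [if_pos hsub, if_pos hiS]
      · have hni : ¬ S ⊆ insert i t := by
          rw [Finset.subset_insert_iff_of_notMem hiS]; exact hsub
        rw [if_neg hsub, hc S hni, if_pos hiS]

lemma coefF_flip_inv (c : Finset (Fin N) → ℝ) (i : Fin N)
    (h : ∀ S, i ∈ S → c S = 0) (x : Cube N) :
    coefF c (flipBit i x) = coefF c x := by
  rw [coefF_apply, coefF_apply]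
  refine Finset.sum_congr rfl fun S _ => ?_
  by_cases hiS : i ∈ S
  · rw [h S hiS, zero_mul, zero_mul]
  · rw [chi_flipBit, if_neg hiS, one_mul]

lemma cexpect_bsign_mul (i : Fin N) (h : Cube N → ℝ)
    (hinv : ∀ x, h (flipBit i x) = h x) :
    cexpect (fun x => bsign (x i) * h x) = 0 := by
  have heq := cexpect_comp_flip i (fun x => bsign (x i) * h x)
  have hpt : ∀ x : Cube N, bsign (flipBit i x i) * h (flipBit i x)
      = -(bsign (x i) * h x) := by
    intro x
    rw [flipBit_apply_self, bsign_not, hinv]; ring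
  simp only [hpt] at heq
  have hneg : cexpect (fun x => -(bsign (x i) * h x))
      = -cexpect (fun x => bsign (x i) * h x) := by
    have := cexpect_const_mul (-1 : ℝ) (fun x => bsign (x i) * h x)
    simpa using this
  rw [hneg] at heq
  linarith

lemma cexpect_CS (u v : Cube N → ℝ) :
    (cexpect fun x => u x * v x)^2
      ≤ (cexpect fun x => (u x)^2) * cexpect fun x => (v x)^2 := by
  simp only [cexpect_def']
  rw [div_pow, div_mul_div_comm]
  have h := Finset.sum_mul_sq_le_sq_mul_sq Finset.univ u v
  have h2 : ((2:ℝ)^N)^2 = 2^N * 2^N := by ring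
  rw [h2]
  exact div_le_div_of_nonneg_right h (by positivity)

lemma cexpect_sq_mul_sq_le (a b : Cube N → ℝ) {α β : ℝ} (hα : 0 ≤ α) (hβ : 0 ≤ β)
    (ha : cexpect (fun x => (a x)^4) ≤ α^2) (hb : cexpect (fun x => (b x)^4) ≤ β^2) :
    cexpect (fun x => (a x)^2 * (b x)^2) ≤ α * β := by
  have h := cexpect_CS (fun x => (a x)^2) (fun x => (b x)^2)
  have h4a : (fun x : Cube N => ((a x)^2)^2) = fun x => (a x)^4 := by funext x; ring
  have h4b : (fun x : Cube N => ((b x)^2)^2) = fun x => (b x)^4 := by funext x; ring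
  rw [h4a, h4b] at h
  have hnn : 0 ≤ cexpect fun x => (a x)^2 * (b x)^2 :=
    cexpect_nonneg fun x => mul_nonneg (sq_nonneg _) (sq_nonneg _)
  have hEB4 : 0 ≤ cexpect fun x => (b x)^4 :=
    cexpect_nonneg fun x => by positivity
  have hprod : (cexpect fun x => (a x)^4) * (cexpect fun x => (b x)^4)
      ≤ α^2 * β^2 := mul_le_mul ha hb hEB4 (by positivity)
  have hsq : (cexpect fun x => (a x)^2 * (b x)^2)^2 ≤ (α * β)^2 := by
    calc (cexpect fun x => (a x)^2 * (b x)^2)^2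
        ≤ (cexpect fun x => (a x)^4) * (cexpect fun x => (b x)^4) := h
      _ ≤ α^2 * β^2 := hprod
      _ = (α * β)^2 := by ring
  exact le_of_pow_le_pow_left₀ two_ne_zero (mul_nonneg hα hβ) hsq

/-- Bonami–Beckner hypercontractivity, (2,4) version, by induction on the support. -/
lemma bonami_aux (ρ : ℝ) (hρ0 : 0 ≤ ρ) (hρ : ρ^2 ≤ 1/3) (s : Finset (Fin N)) :
    ∀ c : Finset (Fin N) → ℝ, (∀ S, ¬ S ⊆ s → c S = 0) →
    cexpect (fun x => (coefF (fun S => ρ ^ S.card * c S) x)^4)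
      ≤ (∑ S : Finset (Fin N), (c S)^2)^2 := by
  induction s using Finset.induction_on with
  | empty =>
    intro c hc
    have hpt : ∀ x : Cube N, coefF (fun S => ρ ^ S.card * c S) x = c ∅ := by
      intro x
      rw [coefF_apply]
      rw [Finset.sum_eq_single ∅]
      · simp [chi_empty]
      · intro S _ hS
        rw [hc S (by simpa [Finset.subset_empty] using hS), mul_zero, zero_mul]
      · intro h; exact absurd (Finset.mem_univ _) h
    simp only [hpt]
    rw [cexpect_const]
    have hsum : ∑ S : Finset (Fin N), (c S)^2 = (c ∅)^2 := by
      rw [Finset.sum_eq_single ∅]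
      · intro S _ hS
        rw [hc S (by simpa [Finset.subset_empty] using hS)]; ring
      · intro h; exact absurd (Finset.mem_univ _) h
    rw [hsum]
    exact le_of_eq (by ring)
  | insert i t hit ih =>
    intro c hc
    have hsupp' : ∀ S, ¬ S ⊆ insert i t → ρ ^ S.card * c S = 0 := by
      intro S hS; rw [hc S hS, mul_zero]
    have e0 : (fun S : Finset (Fin N) => if S ⊆ t then ρ ^ S.card * c S else 0)
        = (fun S => ρ ^ S.card * (if S ⊆ t then c S else 0)) := by
      funext S; by_cases hsub : S ⊆ t <;> simp [hsub]
    have e1 : (fun S : Finset (Fin N) =>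
          if S ⊆ t then ρ ^ (insert i S).card * c (insert i S) else 0)
        = (fun S => ρ * (ρ ^ S.card * (if S ⊆ t then c (insert i S) else 0))) := by
      funext S
      by_cases hsub : S ⊆ t
      · have hiS : i ∉ S := fun hiS => hit (hsub hiS)
        rw [if_pos hsub, if_pos hsub, Finset.card_insert_of_notMem hiS, pow_succ]
        ring
      · rw [if_neg hsub, if_neg hsub]
        ring
    set A : Cube N → ℝ := coefF (fun S => ρ ^ S.card * (if S ⊆ t then c S else 0)) with hA
    set B : Cube N → ℝ :=
      coefF (fun S => ρ ^ S.card * (if S ⊆ t then c (insert i S) else 0)) with hB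
    have hsplitpt : ∀ x : Cube N, coefF (fun S => ρ ^ S.card * c S) x
        = A x + bsign (x i) * (ρ * B x) := by
      intro x
      rw [coefF_split i t hit _ hsupp' x, e0, e1, coefF_smul, hA, hB]
    -- flip invariance
    have hAinv : ∀ x, A (flipBit i x) = A x := by
      intro x
      refine coefF_flip_inv _ i (fun S hiS => ?_) x
      have : ¬ S ⊆ t := fun hsub => hit (hsub hiS)
      rw [if_neg this, mul_zero]
    have hBinv : ∀ x, B (flipBit i x) = B x := by
      intro x
      refine coefF_flip_inv _ i (fun S hiS => ?_) x
      have : ¬ S ⊆ t := fun hsub => hit (hsub hiS)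
      rw [if_neg this, mul_zero]
    -- pointwise expansion of the fourth power
    have hpow : ∀ x : Cube N, (coefF (fun S => ρ ^ S.card * c S) x)^4
        = ((A x)^4 + 6 * ρ^2 * ((A x)^2 * (B x)^2) + ρ^4 * (B x)^4)
          + bsign (x i) * (4 * (A x)^3 * (ρ * B x) + 4 * (A x) * (ρ * B x)^3) := by
      intro x
      rw [hsplitpt x]
      cases hxi : x i <;> simp [bsign] <;> ring
    have hodd : cexpect (fun x => bsign (x i) *
        (4 * (A x)^3 * (ρ * B x) + 4 * (A x) * (ρ * B x)^3)) = 0 := by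
      refine cexpect_bsign_mul i _ fun x => ?_
      rw [hAinv, hBinv]
    have hexp : cexpect (fun x => (coefF (fun S => ρ ^ S.card * c S) x)^4)
        = cexpect (fun x => (A x)^4) + 6 * ρ^2 * cexpect (fun x => (A x)^2 * (B x)^2)
          + ρ^4 * cexpect (fun x => (B x)^4) := by
      have hfn : (fun x => (coefF (fun S => ρ ^ S.card * c S) x)^4)
          = fun x => (((A x)^4 + 6 * ρ^2 * ((A x)^2 * (B x)^2) + ρ^4 * (B x)^4)
            + bsign (x i) * (4 * (A x)^3 * (ρ * B x) + 4 * (A x) * (ρ * B x)^3)) := by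
        funext x; exact hpow x
      rw [hfn, cexpect_add, hodd, add_zero, cexpect_add, cexpect_add,
        cexpect_const_mul, cexpect_const_mul]
    set α := ∑ S : Finset (Fin N), ((if S ⊆ t then c S else 0))^2 with hα
    set β := ∑ S : Finset (Fin N), ((if S ⊆ t then c (insert i S) else 0))^2 with hβ
    have hα0 : 0 ≤ α := Finset.sum_nonneg fun S _ => sq_nonneg _
    have hβ0 : 0 ≤ β := Finset.sum_nonneg fun S _ => sq_nonneg _
    have hIA : cexpect (fun x => (A x)^4) ≤ α^2 :=
      ih (fun S => if S ⊆ t then c S else 0) (fun S hS => if_neg hS)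
    have hIB : cexpect (fun x => (B x)^4) ≤ β^2 :=
      ih (fun S => if S ⊆ t then c (insert i S) else 0) (fun S hS => if_neg hS)
    have hAB : cexpect (fun x => (A x)^2 * (B x)^2) ≤ α * β :=
      cexpect_sq_mul_sq_le A B hα0 hβ0 hIA hIB
    have hmass : β + α = ∑ S : Finset (Fin N), (c S)^2 :=
      mass_split i t hit c hc
    rw [hexp, ← hmass]
    have hρ4 : ρ^4 ≤ 1 := by nlinarith
    have h6ρ2 : 6 * ρ^2 ≤ 2 := by nlinarith
    have hEA2B2 : 0 ≤ cexpect (fun x => (A x)^2 * (B x)^2) :=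
      cexpect_nonneg fun x => mul_nonneg (sq_nonneg _) (sq_nonneg _)
    have hEB4 : 0 ≤ cexpect (fun x => (B x)^4) :=
      cexpect_nonneg fun x => by positivity
    nlinarith [mul_nonneg hα0 hβ0, sq_nonneg ρ]

end Stage3
section Stage4
variable {N : ℕ}

/-- coordinates `≤ i`. -/
noncomputable def Ule (i : Fin N) : Finset (Fin N) := Finset.univ.filter (· ≤ i)
/-- coordinates `< i`. -/
noncomputable def Ult (i : Fin N) : Finset (Fin N) := Finset.univ.filter (· < i)

lemma subset_Ule_iff (S : Finset (Fin N)) (i : Fin N) :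
    S ⊆ Ule i ↔ ∀ j ∈ S, j ≤ i := by
  constructor
  · intro h j hj
    have := h hj
    simp only [Ule, Finset.mem_filter] at this
    exact this.2
  · intro h j hj
    simp only [Ule, Finset.mem_filter]
    exact ⟨Finset.mem_univ j, h j hj⟩

lemma subset_Ult_iff (S : Finset (Fin N)) (i : Fin N) :
    S ⊆ Ult i ↔ ∀ j ∈ S, j < i := by
  constructor
  · intro h j hj
    have := h hj
    simp only [Ult, Finset.mem_filter] at this
    exact this.2
  · intro h j hj
    simp only [Ult, Finset.mem_filter]
    exact ⟨Finset.mem_univ j, h j hj⟩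

/-- the martingale-difference coefficients. -/
noncomputable def dcoef (f : Cube N → ℝ) (i : Fin N) : Finset (Fin N) → ℝ :=
  fun S => if S.max = (i : WithBot (Fin N)) then walshFourier f S else 0

/-- the martingale difference itself. -/
noncomputable def dfun (f : Cube N → ℝ) (i : Fin N) : Cube N → ℝ := coefF (dcoef f i)

/-- fiber partition of sums over nonempty sets according to their maximum. -/
lemma sum_fiber_max (G : Finset (Fin N) → ℝ) :
    ∑ i : Fin N, ∑ S : Finset (Fin N), (if S.max = (i : WithBot (Fin N)) then G S else 0)
      = ∑ S : Finset (Fin N), (if S = ∅ then 0 else G S) := by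
  rw [Finset.sum_comm]
  refine Finset.sum_congr rfl fun S _ => ?_
  by_cases hS : S = ∅
  · subst hS
    rw [if_pos rfl]
    refine Finset.sum_eq_zero fun i _ => ?_
    rw [Finset.max_empty, if_neg (by simp)]
  · rw [if_neg hS]
    obtain ⟨i0, hi0⟩ := Finset.max_of_nonempty (Finset.nonempty_iff_ne_empty.mpr hS)
    have hcond : ∀ i : Fin N, (S.max = (i : WithBot (Fin N))) = (i0 = i) := by
      intro i
      rw [hi0]
      exact propext ⟨fun h => WithBot.coe_inj.mp h, fun h => by rw [h]⟩
    simp only [hcond]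
    rw [Finset.sum_ite_eq Finset.univ i0 (fun _ => G S)]
    simp

/-- martingale difference as a difference of conditional expectations. -/
lemma dfun_eq_avg_sub (f : Cube N → ℝ) (i : Fin N) (x : Cube N) :
    dfun f i x = avg (Ule i) f x - avg (Ult i) f x := by
  rw [dfun, avg_coef, avg_coef, coefF_apply, coefF_apply, coefF_apply,
    ← Finset.sum_sub_distrib]
  refine Finset.sum_congr rfl fun S _ => ?_
  rw [← sub_mul]
  congr 1
  rw [dcoef]
  by_cases hS : S = ∅
  · subst hS
    rw [if_neg (by rw [Finset.max_empty]; simp)]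
    rw [if_pos (Finset.empty_subset _), if_pos (Finset.empty_subset _)]
    ring
  · have hne : S.Nonempty := Finset.nonempty_iff_ne_empty.mpr hS
    set m := S.max' hne with hm
    have hmax : S.max = (m : WithBot (Fin N)) := (Finset.coe_max' hne).symm
    have hmem : m ∈ S := Finset.max'_mem S hne
    have hle : ∀ j ∈ S, j ≤ m := fun j hj => Finset.le_max' S j hj
    by_cases hmi : m = i
    · subst hmi
      rw [if_pos hmax]
      have h1 : S ⊆ Ule m := (subset_Ule_iff S m).mpr hle
      have h2 : ¬ S ⊆ Ult m := by
        intro h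
        exact absurd ((subset_Ult_iff S m).mp h m hmem) (lt_irrefl m)
      rw [if_pos h1, if_neg h2]
      ring
    · rw [if_neg (by rw [hmax]; exact fun h => hmi (WithBot.coe_inj.mp h))]
      have hiff : (S ⊆ Ule i) ↔ (S ⊆ Ult i) := by
        rw [subset_Ule_iff, subset_Ult_iff]
        constructor
        · intro h j hj
          rcases lt_or_eq_of_le (h j hj) with h' | h'
          · exact h'
          · exfalso
            apply hmi
            have him : i ∈ S := h' ▸ hj
            exact le_antisymm (h m hmem) (hle i him)
        · intro h j hj
          exact le_of_lt (h j hj)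
      by_cases h1 : S ⊆ Ule i
      · rw [if_pos h1, if_pos (hiff.mp h1)]; ring
      · rw [if_neg h1, if_neg (fun h => h1 (hiff.mpr h))]; ring

lemma coefF_add_flip (c : Finset (Fin N) → ℝ) (i : Fin N) (x : Cube N) :
    coefF c x + coefF c (flipBit i x)
      = 2 * coefF (fun S => if i ∈ S then 0 else c S) x := by
  rw [coefF_apply, coefF_apply, coefF_apply, Finset.mul_sum, ← Finset.sum_add_distrib]
  refine Finset.sum_congr rfl fun S _ => ?_
  rw [chi_flipBit]
  by_cases hiS : i ∈ S
  · rw [if_pos hiS, if_pos hiS]; ring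
  · rw [if_neg hiS, if_neg hiS]; ring

lemma avg_Ult_eq (f : Cube N → ℝ) (i : Fin N) (x : Cube N) :
    avg (Ult i) f x = (avg (Ule i) f x + avg (Ule i) f (flipBit i x)) / 2 := by
  rw [avg_coef]
  rw [show avg (Ule i) f = coefF (fun S => if S ⊆ Ule i then walshFourier f S else 0) from
    avg_coef _ f]
  rw [coefF_add_flip]
  have hmask : (fun S : Finset (Fin N) =>
        if i ∈ S then 0 else (if S ⊆ Ule i then walshFourier f S else 0))
      = (fun S => if S ⊆ Ult i then walshFourier f S else 0) := by
    funext S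
    by_cases hiS : i ∈ S
    · rw [if_pos hiS, if_neg (fun h => absurd ((subset_Ult_iff S i).mp h i hiS) (lt_irrefl i))]
    · rw [if_neg hiS]
      have : (S ⊆ Ule i) ↔ (S ⊆ Ult i) := by
        rw [subset_Ule_iff, subset_Ult_iff]
        constructor
        · intro h j hj
          exact lt_of_le_of_ne (h j hj) (fun hji => hiS (hji ▸ hj))
        · intro h j hj
          exact le_of_lt (h j hj)
      by_cases h1 : S ⊆ Ule i
      · rw [if_pos h1, if_pos (this.mp h1)]
      · rw [if_neg h1, if_neg (fun h => h1 (this.mpr h))]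
  rw [hmask]
  ring

lemma avg_flip_comm (f : Cube N → ℝ) (i : Fin N) (x : Cube N) :
    avg (Ule i) f (flipBit i x) = avg (Ule i) (fun z => f (flipBit i z)) x := by
  rw [avg, avg]
  congr 1
  funext y
  congr 1
  funext j
  by_cases hj : j = i
  · subst hj
    have hji : j ∈ Ule j := by simp [Ule]
    rw [if_pos hji, flipBit_apply_self, flipBit_apply_self, if_pos hji]
  · rw [flipBit_apply_ne i j _ hj, flipBit_apply_ne i j _ hj]

/-- expectations subtract. -/
lemma cexpect_sub (f g : Cube N → ℝ) :
    cexpect (fun x => f x - g x) = cexpect f - cexpect g := by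
  simp only [cexpect_def']
  rw [Finset.sum_sub_distrib, sub_div]

lemma avg_sub (U : Finset (Fin N)) (f g : Cube N → ℝ) (x : Cube N) :
    avg U (fun z => f z - g z) x = avg U f x - avg U g x :=
  cexpect_sub (fun y => f (fun j => if j ∈ U then x j else y j))
    (fun y => g (fun j => if j ∈ U then x j else y j))

/-- pointwise formula: the martingale difference is half an averaged derivative. -/
lemma dfun_eq_half_avg (f : Cube N → ℝ) (i : Fin N) (x : Cube N) :
    dfun f i x = (avg (Ule i) (fun z => f z - f (flipBit i z)) x) / 2 := by
  rw [dfun_eq_avg_sub, avg_Ult_eq, avg_flip_comm, avg_sub]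
  ring

/-- bound on the L¹ norm of the martingale differences. -/
lemma cexpect_abs_dfun_le (f : Cube N → ℝ) (i : Fin N) :
    cexpect (fun x => |dfun f i x|) ≤ influence i f / 2 := by
  have hpt : ∀ x : Cube N, |dfun f i x|
      ≤ (avg (Ule i) (fun z => |f (flipBit i z) - f z|) x) / 2 := by
    intro x
    rw [dfun_eq_half_avg, abs_div]
    rw [show |(2:ℝ)| = 2 by norm_num]
    apply div_le_div_of_nonneg_right _ (by norm_num : (0:ℝ) ≤ 2)
    rw [avg, avg]
    calc |cexpect fun y => f (fun j => if j ∈ Ule i then x j else y j)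
            - f (flipBit i fun j => if j ∈ Ule i then x j else y j)|
        ≤ cexpect fun y => |f (fun j => if j ∈ Ule i then x j else y j)
            - f (flipBit i fun j => if j ∈ Ule i then x j else y j)| := abs_cexpect_le _
      _ = cexpect fun y => |f (flipBit i fun j => if j ∈ Ule i then x j else y j)
            - f (fun j => if j ∈ Ule i then x j else y j)| := by
          congr 1; funext y; rw [abs_sub_comm]
  calc cexpect (fun x => |dfun f i x|)
      ≤ cexpect (fun x => (avg (Ule i) (fun z => |f (flipBit i z) - f z|) x) / 2) :=
        cexpect_mono hpt
    _ = cexpect (avg (Ule i) (fun z => |f (flipBit i z) - f z|)) / 2 := by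
        rw [show (fun x => (avg (Ule i) (fun z => |f (flipBit i z) - f z|) x) / 2)
            = fun x => (1/2) * (avg (Ule i) (fun z => |f (flipBit i z) - f z|) x) from by
          funext x; ring]
        rw [cexpect_const_mul]
        ring
    _ = influence i f / 2 := by
        rw [cexpect_avg]
        rfl

end Stage4
section Stage5
variable {N : ℕ}

lemma sum_CS_sqrt (u v : Fin N → ℝ) :
    ∑ i, u i * v i ≤ Real.sqrt (∑ i, (u i)^2) * Real.sqrt (∑ i, (v i)^2) := by
  have h := Finset.sum_mul_sq_le_sq_mul_sq Finset.univ u v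
  calc ∑ i, u i * v i ≤ |∑ i, u i * v i| := le_abs_self _
    _ = Real.sqrt ((∑ i, u i * v i)^2) := (Real.sqrt_sq_eq_abs _).symm
    _ ≤ Real.sqrt ((∑ i, (u i)^2) * (∑ i, (v i)^2)) := Real.sqrt_le_sqrt h
    _ = Real.sqrt (∑ i, (u i)^2) * Real.sqrt (∑ i, (v i)^2) :=
        Real.sqrt_mul (Finset.sum_nonneg fun i _ => sq_nonneg _) _

/-- the per-coordinate hypercontractive estimate. -/
lemma per_coord (f : Cube N → ℝ) (i : Fin N) :
    ∑ S : Finset (Fin N), (3⁻¹:ℝ)^S.card * (dcoef f i S)^2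
      ≤ Real.sqrt ((cexpect fun x => |dfun f i x|)
          * Real.sqrt (∑ S : Finset (Fin N), (dcoef f i S)^2))
        * Real.sqrt (∑ S : Finset (Fin N), (dcoef f i S)^2) := by
  set c : Finset (Fin N) → ℝ := dcoef f i with hc
  set d : Cube N → ℝ := dfun f i with hd
  have hdc : d = coefF c := rfl
  set uu : Cube N → ℝ := coefF (fun S => (3⁻¹:ℝ)^S.card * c S) with huu
  set a : ℝ := cexpect fun x => |d x| with ha
  set b : ℝ := ∑ S : Finset (Fin N), (c S)^2 with hb
  have hb0 : 0 ≤ b := Finset.sum_nonneg fun S _ => sq_nonneg _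
  have ha0 : 0 ≤ a := cexpect_nonneg fun x => abs_nonneg _
  -- v = E[d·u]
  have hv : cexpect (fun x => d x * uu x)
      = ∑ S : Finset (Fin N), (3⁻¹:ℝ)^S.card * (c S)^2 := by
    rw [hdc, huu, cexpect_coefF_mul]
    exact Finset.sum_congr rfl fun S _ => by ring
  -- E d² = b
  have hb2 : cexpect (fun x => (d x)^2) = b := by
    have : (fun x => (d x)^2) = fun x => d x * d x := by funext x; ring
    rw [this, hdc, cexpect_coefF_mul]
    exact Finset.sum_congr rfl fun S _ => by ring
  -- hypercontractivity: E u⁴ ≤ b²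
  have hEu4 : cexpect (fun x => (uu x)^4) ≤ b^2 := by
    set ρ : ℝ := Real.sqrt 3⁻¹ with hρ
    have hρ0 : 0 ≤ ρ := Real.sqrt_nonneg _
    have hρ2 : ρ^2 = 3⁻¹ := Real.sq_sqrt (by norm_num)
    have hcoef : (fun S : Finset (Fin N) => (3⁻¹:ℝ)^S.card * c S)
        = fun S => ρ ^ S.card * (ρ ^ S.card * c S) := by
      funext S
      rw [← mul_assoc, ← pow_add, ← two_mul, pow_mul, hρ2]
    have hbon := bonami_aux ρ hρ0 (by rw [hρ2]; norm_num) Finset.univ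
      (fun S => ρ ^ S.card * c S)
      (fun S hS => absurd (Finset.subset_univ S) hS)
    rw [huu, hcoef]
    refine le_trans hbon ?_
    have hsum : ∑ S : Finset (Fin N), (ρ ^ S.card * c S)^2 ≤ b := by
      rw [hb]
      refine Finset.sum_le_sum fun S _ => ?_
      have h1 : (ρ ^ S.card * c S)^2 = (ρ^2) ^ S.card * (c S)^2 := by
        rw [← pow_mul, pow_mul']; ring
      rw [h1, hρ2]
      have : (3⁻¹:ℝ) ^ S.card ≤ 1 := pow_le_one₀ (by norm_num) (by norm_num)
      nlinarith [sq_nonneg (c S)]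
    have hnn : 0 ≤ ∑ S : Finset (Fin N), (ρ ^ S.card * c S)^2 :=
      Finset.sum_nonneg fun S _ => sq_nonneg _
    exact pow_le_pow_left₀ hnn hsum 2
  set w : ℝ := cexpect fun x => |d x| * |uu x| with hw
  set z : ℝ := cexpect fun x => |d x| * (uu x)^2 with hz
  have hw0 : 0 ≤ w := cexpect_nonneg fun x => mul_nonneg (abs_nonneg _) (abs_nonneg _)
  have hz0 : 0 ≤ z := cexpect_nonneg fun x => mul_nonneg (abs_nonneg _) (sq_nonneg _)
  -- v ≤ w
  have h1 : ∑ S : Finset (Fin N), (3⁻¹:ℝ)^S.card * (c S)^2 ≤ w := by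
    rw [← hv, hw]
    refine cexpect_mono fun x => ?_
    calc d x * uu x ≤ |d x * uu x| := le_abs_self _
      _ = |d x| * |uu x| := abs_mul _ _
  -- w² ≤ a z
  have h2 : w^2 ≤ a * z := by
    have hCS := cexpect_CS (fun x => Real.sqrt |d x|) (fun x => Real.sqrt |d x| * |uu x|)
    have e1 : (fun x => Real.sqrt |d x| * (Real.sqrt |d x| * |uu x|))
        = fun x => |d x| * |uu x| := by
      funext x
      rw [← mul_assoc, Real.mul_self_sqrt (abs_nonneg _)]
    have e2 : (fun x => (Real.sqrt |d x|)^2) = fun x => |d x| := by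
      funext x
      rw [Real.sq_sqrt (abs_nonneg _)]
    have e3 : (fun x => (Real.sqrt |d x| * |uu x|)^2) = fun x => |d x| * (uu x)^2 := by
      funext x
      rw [mul_pow, Real.sq_sqrt (abs_nonneg _), sq_abs]
    rw [e1, e2, e3] at hCS
    exact hCS
  -- z² ≤ b · E u⁴ ≤ b·b²
  have h3 : z^2 ≤ b * b^2 := by
    have hCS := cexpect_CS (fun x => |d x|) (fun x => (uu x)^2)
    have e1 : (fun x => |d x| * (uu x)^2) = fun x => |d x| * (uu x)^2 := rfl
    have e2 : (fun x => (|d x|)^2) = fun x => (d x)^2 := by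
      funext x; rw [sq_abs]
    have e3 : (fun x => ((uu x)^2)^2) = fun x => (uu x)^4 := by
      funext x; ring
    rw [e2, e3, hb2] at hCS
    calc z^2 ≤ b * cexpect (fun x => (uu x)^4) := hCS
      _ ≤ b * b^2 := mul_le_mul_of_nonneg_left hEu4 hb0
  have h4 : z ≤ b * Real.sqrt b := by
    have : z = Real.sqrt (z^2) := (Real.sqrt_sq hz0).symm
    rw [this]
    calc Real.sqrt (z^2) ≤ Real.sqrt (b * b^2) := Real.sqrt_le_sqrt h3
      _ = Real.sqrt (b^2 * b) := by rw [show b * b^2 = b^2 * b from by ring]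
      _ = b * Real.sqrt b := by rw [Real.sqrt_mul (sq_nonneg b), Real.sqrt_sq hb0]
  have h5 : w^2 ≤ (a * Real.sqrt b) * b := by
    calc w^2 ≤ a * z := h2
      _ ≤ a * (b * Real.sqrt b) := mul_le_mul_of_nonneg_left h4 ha0
      _ = (a * Real.sqrt b) * b := by ring
  have h6 : w ≤ Real.sqrt (a * Real.sqrt b) * Real.sqrt b := by
    have : w = Real.sqrt (w^2) := (Real.sqrt_sq hw0).symm
    rw [this]
    calc Real.sqrt (w^2) ≤ Real.sqrt ((a * Real.sqrt b) * b) := Real.sqrt_le_sqrt h5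
      _ = Real.sqrt (a * Real.sqrt b) * Real.sqrt b :=
          Real.sqrt_mul (mul_nonneg ha0 (Real.sqrt_nonneg _)) _
  exact le_trans h1 h6

/-- The key global estimate: low-frequency noise-weighted Fourier mass is controlled by
    the influences (Keller–Kindler style martingale argument). -/
lemma V13_bound (f : Cube N → ℝ) :
    ∑ S : Finset (Fin N), (if S = ∅ then 0 else (3⁻¹:ℝ)^S.card * (walshFourier f S)^2)
      ≤ Real.sqrt (Real.sqrt (∑ i : Fin N, (cexpect fun x => |dfun f i x|)^2)
          * Real.sqrt (∑ i : Fin N, ∑ S : Finset (Fin N), (dcoef f i S)^2))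
        * Real.sqrt (∑ i : Fin N, ∑ S : Finset (Fin N), (dcoef f i S)^2) := by
  set a : Fin N → ℝ := fun i => cexpect fun x => |dfun f i x| with hadef
  set b : Fin N → ℝ := fun i => ∑ S : Finset (Fin N), (dcoef f i S)^2 with hbdef
  have ha0 : ∀ i, 0 ≤ a i := fun i => cexpect_nonneg fun x => abs_nonneg _
  have hb0 : ∀ i, 0 ≤ b i := fun i => Finset.sum_nonneg fun S _ => sq_nonneg _
  have hstep1 : ∑ S : Finset (Fin N),
      (if S = ∅ then 0 else (3⁻¹:ℝ)^S.card * (walshFourier f S)^2)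
      = ∑ i : Fin N, ∑ S : Finset (Fin N), (3⁻¹:ℝ)^S.card * (dcoef f i S)^2 := by
    rw [show (∑ i : Fin N, ∑ S : Finset (Fin N), (3⁻¹:ℝ)^S.card * (dcoef f i S)^2)
        = ∑ i : Fin N, ∑ S : Finset (Fin N),
            (if S.max = (i : WithBot (Fin N))
              then (3⁻¹:ℝ)^S.card * (walshFourier f S)^2 else 0) from by
      refine Finset.sum_congr rfl fun i _ => Finset.sum_congr rfl fun S _ => ?_
      rw [dcoef]
      by_cases h : S.max = (i : WithBot (Fin N)) <;> simp [h]]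
    rw [sum_fiber_max]
  rw [hstep1]
  calc ∑ i : Fin N, ∑ S : Finset (Fin N), (3⁻¹:ℝ)^S.card * (dcoef f i S)^2
      ≤ ∑ i : Fin N, Real.sqrt (a i * Real.sqrt (b i)) * Real.sqrt (b i) :=
        Finset.sum_le_sum fun i _ => per_coord f i
    _ ≤ Real.sqrt (∑ i : Fin N, (Real.sqrt (a i * Real.sqrt (b i)))^2)
          * Real.sqrt (∑ i : Fin N, (Real.sqrt (b i))^2) :=
        sum_CS_sqrt _ _
    _ = Real.sqrt (∑ i : Fin N, a i * Real.sqrt (b i))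
          * Real.sqrt (∑ i : Fin N, b i) := by
        congr 1
        · congr 1
          refine Finset.sum_congr rfl fun i _ => ?_
          rw [Real.sq_sqrt (mul_nonneg (ha0 i) (Real.sqrt_nonneg _))]
        · congr 1
          refine Finset.sum_congr rfl fun i _ => ?_
          rw [Real.sq_sqrt (hb0 i)]
    _ ≤ Real.sqrt (Real.sqrt (∑ i : Fin N, (a i)^2) * Real.sqrt (∑ i : Fin N, b i))
          * Real.sqrt (∑ i : Fin N, b i) := by
        refine mul_le_mul_of_nonneg_right (Real.sqrt_le_sqrt ?_) (Real.sqrt_nonneg _)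
        calc ∑ i : Fin N, a i * Real.sqrt (b i)
            ≤ Real.sqrt (∑ i : Fin N, (a i)^2)
              * Real.sqrt (∑ i : Fin N, (Real.sqrt (b i))^2) := sum_CS_sqrt _ _
          _ = Real.sqrt (∑ i : Fin N, (a i)^2) * Real.sqrt (∑ i : Fin N, b i) := by
              congr 1
              congr 1
              refine Finset.sum_congr rfl fun i _ => ?_
              rw [Real.sq_sqrt (hb0 i)]

end Stage5
section Stage6
variable {N : ℕ}

lemma cexpect_indE_sq_le_one (A : Finset (Cube N)) :
    cexpect (fun x => indE A x * indE A x) ≤ 1 := by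
  calc cexpect (fun x => indE A x * indE A x) ≤ cexpect (fun _ : Cube N => (1:ℝ)) := by
        refine cexpect_mono fun x => ?_
        by_cases hx : x ∈ A <;> simp [indE, hx]
    _ = 1 := cexpect_const 1

lemma sum_fhatsq_ne_le_one (A : Finset (Cube N)) :
    ∑ S : Finset (Fin N), (if S = ∅ then 0 else (walshFourier (indE A) S)^2) ≤ 1 := by
  calc ∑ S : Finset (Fin N), (if S = ∅ then 0 else (walshFourier (indE A) S)^2)
      ≤ ∑ S : Finset (Fin N), (walshFourier (indE A) S)^2 := by
        refine Finset.sum_le_sum fun S _ => ?_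
        by_cases hS : S = ∅ <;> simp [hS, sq_nonneg]
    _ = cexpect (fun x => indE A x * indE A x) := by
        rw [cexpect_mul_eq_sum]
        exact Finset.sum_congr rfl fun S _ => by ring
    _ ≤ 1 := cexpect_indE_sq_le_one A

lemma sum_b_eq (A : Finset (Cube N)) :
    ∑ i : Fin N, ∑ S : Finset (Fin N), (dcoef (indE A) i S)^2
      = ∑ S : Finset (Fin N), (if S = ∅ then 0 else (walshFourier (indE A) S)^2) := by
  rw [← sum_fiber_max (fun S => (walshFourier (indE A) S)^2)]
  refine Finset.sum_congr rfl fun i _ => Finset.sum_congr rfl fun S _ => ?_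
  rw [dcoef]
  by_cases h : S.max = (i : WithBot (Fin N)) <;> simp [h]

lemma sum_a_sq_le (A : Finset (Cube N)) :
    ∑ i : Fin N, (cexpect fun x => |dfun (indE A) i x|)^2 ≤ sqInfE A / 4 := by
  rw [sqInfE, sqInf, Finset.sum_div]
  refine Finset.sum_le_sum fun i _ => ?_
  have h := cexpect_abs_dfun_le (indE A) i
  have h0 : 0 ≤ cexpect fun x => |dfun (indE A) i x| :=
    cexpect_nonneg fun x => abs_nonneg _
  calc (cexpect fun x => |dfun (indE A) i x|)^2
      ≤ (influence i (indE A) / 2)^2 := pow_le_pow_left₀ h0 h 2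
    _ = influence i (indE A)^2 / 4 := by ring

/-- The key bound specialised to indicators. -/
lemma V13_indE (A : Finset (Cube N)) :
    ∑ S : Finset (Fin N), (if S = ∅ then 0 else (3⁻¹:ℝ)^S.card * (walshFourier (indE A) S)^2)
      ≤ Real.sqrt (Real.sqrt (sqInfE A / 4)) := by
  refine (V13_bound (indE A)).trans ?_
  set Sa := ∑ i : Fin N, (cexpect fun x => |dfun (indE A) i x|)^2 with hSa
  set Sb := ∑ i : Fin N, ∑ S : Finset (Fin N), (dcoef (indE A) i S)^2 with hSb
  have hSa0 : 0 ≤ Sa := Finset.sum_nonneg fun i _ => sq_nonneg _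
  have hSb0 : 0 ≤ Sb := Finset.sum_nonneg fun i _ =>
    Finset.sum_nonneg fun S _ => sq_nonneg _
  have hSb1 : Sb ≤ 1 := by
    rw [hSb, sum_b_eq]
    exact sum_fhatsq_ne_le_one A
  have hSaη : Sa ≤ sqInfE A / 4 := sum_a_sq_le A
  have hsb1 : Real.sqrt Sb ≤ 1 := Real.sqrt_le_one.mpr hSb1
  have hsa : Real.sqrt Sa ≤ Real.sqrt (sqInfE A / 4) := Real.sqrt_le_sqrt hSaη
  calc Real.sqrt (Real.sqrt Sa * Real.sqrt Sb) * Real.sqrt Sb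
      ≤ Real.sqrt (Real.sqrt (sqInfE A / 4) * 1) * 1 := by
        refine mul_le_mul ?_ hsb1 (Real.sqrt_nonneg _) (Real.sqrt_nonneg _)
        refine Real.sqrt_le_sqrt ?_
        exact mul_le_mul hsa hsb1 (Real.sqrt_nonneg _) (Real.sqrt_nonneg _)
    _ = Real.sqrt (Real.sqrt (sqInfE A / 4)) := by rw [mul_one, mul_one]

/-- The second-moment (noise) bound with a level cut-off `k`. -/
lemma M_le (ε : ℝ) (hε0 : 0 < ε) (hε2 : ε < 1/2) (A : Finset (Cube N)) (k : ℕ) :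
    cexpect (fun x => (condProb ε A x - cprob A)^2)
      ≤ 3^k * Real.sqrt (Real.sqrt (sqInfE A / 4)) + ((1-2*ε)^2)^k := by
  rw [secondMoment]
  set r : ℝ := (1-2*ε)^2 with hr
  have hr0 : 0 ≤ r := sq_nonneg _
  have hr1 : r ≤ 1 := by nlinarith
  have key : ∀ S : Finset (Fin N), ¬ S = ∅ →
      r ^ S.card ≤ 3^k * (3⁻¹:ℝ)^S.card + r^k := by
    intro S _
    by_cases hcard : S.card ≤ k
    · have h1 : r ^ S.card ≤ 1 := pow_le_one₀ hr0 hr1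
      have h2 : (1:ℝ) ≤ 3^k * (3⁻¹)^S.card := by
        have h3 : (3:ℝ)^S.card ≤ 3^k := pow_le_pow_right₀ (by norm_num) hcard
        have h3pos : (0:ℝ) < 3^S.card := by positivity
        rw [inv_pow, ← div_eq_mul_inv, le_div_iff₀ h3pos, one_mul]
        exact h3
      have h4 : (0:ℝ) ≤ r^k := pow_nonneg hr0 k
      linarith
    · have hk : k ≤ S.card := le_of_not_ge hcard
      have h1 : r ^ S.card ≤ r ^ k := pow_le_pow_of_le_one hr0 hr1 hk
      have h2 : (0:ℝ) ≤ 3^k * (3⁻¹)^S.card := by positivity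
      linarith
  calc ∑ S : Finset (Fin N), (if S = ∅ then 0 else r ^ S.card * (walshFourier (indE A) S)^2)
      ≤ ∑ S : Finset (Fin N),
          ((if S = ∅ then 0 else 3^k * (3⁻¹:ℝ)^S.card * (walshFourier (indE A) S)^2)
            + (if S = ∅ then 0 else r^k * (walshFourier (indE A) S)^2)) := by
        refine Finset.sum_le_sum fun S _ => ?_
        by_cases hS : S = ∅
        · simp [hS]
        · rw [if_neg hS, if_neg hS, if_neg hS]
          have hkey := key S hS
          nlinarith [sq_nonneg (walshFourier (indE A) S)]
    _ = 3^k * (∑ S : Finset (Fin N),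
            (if S = ∅ then 0 else (3⁻¹:ℝ)^S.card * (walshFourier (indE A) S)^2))
          + r^k * (∑ S : Finset (Fin N),
            (if S = ∅ then 0 else (walshFourier (indE A) S)^2)) := by
        rw [Finset.sum_add_distrib]
        congr 1
        · rw [Finset.mul_sum]
          refine Finset.sum_congr rfl fun S _ => ?_
          by_cases hS : S = ∅
          · simp [hS]
          · rw [if_neg hS, if_neg hS]; ring
        · rw [Finset.mul_sum]
          refine Finset.sum_congr rfl fun S _ => ?_
          by_cases hS : S = ∅
          · simp [hS]
          · rw [if_neg hS, if_neg hS]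
    _ ≤ 3^k * Real.sqrt (Real.sqrt (sqInfE A / 4)) + r^k * 1 := by
        refine add_le_add ?_ ?_
        · exact mul_le_mul_of_nonneg_left (V13_indE A) (by positivity)
        · exact mul_le_mul_of_nonneg_left (sum_fhatsq_ne_le_one A) (pow_nonneg hr0 k)
    _ = 3^k * Real.sqrt (Real.sqrt (sqInfE A / 4)) + r^k := by rw [mul_one]

/-- Markov/Chebyshev inequality for the gauge. -/
lemma markov_filter (ε δ : ℝ) (A : Finset (Cube N)) (hδ : 0 < δ) :
    cprob (@Finset.filter _ (fun x => δ < |condProb ε A x - cprob A|)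
        (Classical.decPred _) Finset.univ) * δ^2
      ≤ cexpect (fun x => (condProb ε A x - cprob A)^2) := by
  set F := @Finset.filter _ (fun x => δ < |condProb ε A x - cprob A|)
    (Classical.decPred _) Finset.univ with hF
  rw [cprob_eq_cexpect F]
  rw [show cexpect (indE F) * δ^2 = δ^2 * cexpect (indE F) from mul_comm _ _,
    ← cexpect_const_mul]
  refine cexpect_mono fun x => ?_
  by_cases hx : x ∈ F
  · have hmem := (Finset.mem_filter.mp hx).2
    rw [indE, if_pos hx, mul_one]
    calc δ^2 ≤ |condProb ε A x - cprob A|^2 :=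
          pow_le_pow_left₀ hδ.le (le_of_lt hmem) 2
      _ = (condProb ε A x - cprob A)^2 := sq_abs _
  · rw [indE, if_neg hx, mul_zero]
    exact sq_nonneg _

lemma gauge_le_of (ε δ : ℝ) (A : Finset (Cube N)) (hδ : 0 < δ)
    (hM : cexpect (fun x => (condProb ε A x - cprob A)^2) < δ^3) :
    gauge ε A ≤ δ := by
  apply csInf_le
  · exact ⟨0, fun y hy => le_of_lt hy.1⟩
  refine ⟨hδ, ?_⟩
  have hmar := markov_filter ε δ A hδ
  have hδ2 : (0:ℝ) < δ^2 := by positivity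
  have : cprob (@Finset.filter _ (fun x => δ < |condProb ε A x - cprob A|)
      (Classical.decPred _) Finset.univ) * δ^2 < δ * δ^2 := by
    calc cprob _ * δ^2 ≤ cexpect (fun x => (condProb ε A x - cprob A)^2) := hmar
      _ < δ^3 := hM
      _ = δ * δ^2 := by ring
  exact lt_of_mul_lt_mul_right this hδ2.le

lemma gauge_nonneg (ε : ℝ) (A : Finset (Cube N)) : 0 ≤ gauge ε A :=
  Real.sInf_nonneg fun y hy => le_of_lt hy.1

lemma sqInfE_nonneg (A : Finset (Cube N)) : 0 ≤ sqInfE A := by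
  rw [sqInfE, sqInf]
  exact Finset.sum_nonneg fun i _ => sq_nonneg _

end Stage6
/-- If II(A_m) → 0 then the events A_m are asymptotically noise sensitive. -/
theorem noise_sensitive_of_sqInf_tendsto_zero
    (n : ℕ → ℕ) (A : ∀ m, Finset (Cube (n m)))
    (h : Tendsto (fun m => sqInfE (A m)) atTop (nhds 0)) :
    ∀ ε : ℝ, 0 < ε → ε < 1/2 →
      Tendsto (fun m => gauge ε (A m)) atTop (nhds 0) := by
  intro ε hε0 hε2
  rw [Metric.tendsto_atTop]
  intro δ' hδ'
  set δ : ℝ := min (δ'/2) 1 with hδdef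
  have hδ0 : 0 < δ := lt_min (by linarith) one_pos
  set r : ℝ := (1-2*ε)^2 with hr
  have hr0 : 0 ≤ r := sq_nonneg _
  have hr1 : r < 1 := by nlinarith
  obtain ⟨k, hk⟩ := exists_pow_lt_of_lt_one (show (0:ℝ) < δ^3/2 by positivity) hr1
  set q : ℝ := δ^3 / (2 * 3^k) with hq
  have hq0 : 0 < q := by positivity
  obtain ⟨M0, hM0⟩ := Metric.tendsto_atTop.mp h (4*q^4) (by positivity)
  refine ⟨M0, fun m hm => ?_⟩
  have hηsmall : sqInfE (A m) < 4*q^4 := by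
    have hd := hM0 m hm
    rw [Real.dist_eq, sub_zero] at hd
    exact (abs_lt.mp hd).2
  have hη0 : 0 ≤ sqInfE (A m) := sqInfE_nonneg (A m)
  have hV : Real.sqrt (Real.sqrt (sqInfE (A m)/4)) < q := by
    have h1 : sqInfE (A m)/4 < q^4 := by linarith
    have h2 : Real.sqrt (sqInfE (A m)/4) < q^2 := by
      have h3 := Real.sqrt_lt_sqrt (by positivity) h1
      rwa [show Real.sqrt (q^4) = q^2 from by
        rw [show q^4 = (q^2)^2 from by ring, Real.sqrt_sq (by positivity)]] at h3
    have h3 := Real.sqrt_lt_sqrt (Real.sqrt_nonneg _) h2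
    rwa [Real.sqrt_sq hq0.le] at h3
  have hMlt : cexpect (fun x => (condProb ε (A m) x - cprob (A m))^2) < δ^3 := by
    refine lt_of_le_of_lt (M_le ε hε0 hε2 (A m) k) ?_
    have h3k : (0:ℝ) < 3^k := by positivity
    calc 3^k * Real.sqrt (Real.sqrt (sqInfE (A m)/4)) + r^k
        < 3^k * q + δ^3/2 := add_lt_add (mul_lt_mul_of_pos_left hV h3k) hk
      _ = δ^3/2 + δ^3/2 := by
          rw [hq]
          field_simp
      _ = δ^3 := by ring
  have hgauge := gauge_le_of ε δ (A m) hδ0 hMlt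
  rw [Real.dist_eq, sub_zero, abs_of_nonneg (gauge_nonneg ε (A m))]
  calc gauge ε (A m) ≤ δ := hgauge
    _ ≤ δ'/2 := min_le_left _ _
    _ < δ' := by linarith

end BKS
end

section
/- For every event A ⊆ Ω_n and every ε ∈ (0,1): (1/2) · VAR(A, ε) ≤ φ(A, ε) ≤ VAR(A, ε)^{1/3}. -/
namespace BKS

open Finset Filter

variable {ι : Type} [Fintype ι] [DecidableEq ι]

set_option linter.unusedSectionVars false

lemma kernel_nonneg {ε : ℝ} (hε0 : 0 ≤ ε) (hε1 : ε ≤ 1) (x y : ι → Bool) :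
    0 ≤ noiseKernel ε x y :=
  Finset.prod_nonneg fun j _ => by split <;> linarith

lemma kernel_sum_one (ε : ℝ) (x : ι → Bool) :
    ∑ y : ι → Bool, noiseKernel ε x y = 1 := by
  unfold noiseKernel
  rw [← Fintype.piFinset_univ]
  rw [← Finset.prod_univ_sum (fun _ : ι => (Finset.univ : Finset Bool))
      (fun j b => if b = x j then 1 - ε else ε)]
  apply Finset.prod_eq_one
  intro j _
  rw [Fintype.sum_bool]
  cases h : x j <;> simp [h]

lemma kernel_symm (ε : ℝ) (x y : ι → Bool) :
    noiseKernel ε x y = noiseKernel ε y x := by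
  unfold noiseKernel
  exact Finset.prod_congr rfl fun j _ => by simp [eq_comm]

lemma condProb_nonneg {ε : ℝ} (hε0 : 0 ≤ ε) (hε1 : ε ≤ 1)
    (A : Finset (ι → Bool)) (x : ι → Bool) : 0 ≤ condProb ε A x :=
  Finset.sum_nonneg fun y _ => kernel_nonneg hε0 hε1 x y

lemma condProb_le_one {ε : ℝ} (hε0 : 0 ≤ ε) (hε1 : ε ≤ 1)
    (A : Finset (ι → Bool)) (x : ι → Bool) : condProb ε A x ≤ 1 := by
  rw [← kernel_sum_one ε x]
  exact Finset.sum_le_sum_of_subset_of_nonneg (Finset.subset_univ A)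
    (fun y _ _ => kernel_nonneg hε0 hε1 x y)

lemma Qop_indE (ε : ℝ) (A : Finset (ι → Bool)) (x : ι → Bool) :
    Qop ε (indE A) x = condProb ε A x := by
  unfold Qop indE condProb
  simp [mul_ite, Finset.sum_ite_mem]

lemma cexpect_Qop_indE (ε : ℝ) (A : Finset (ι → Bool)) :
    cexpect (Qop ε (indE A)) = cprob A := by
  unfold cexpect cprob
  congr 1
  simp only [Qop_indE]
  unfold condProb
  rw [Finset.sum_comm]
  rw [Finset.sum_congr rfl (fun y _ => by
    rw [Finset.sum_congr rfl (fun x _ => kernel_symm ε x y), kernel_sum_one])]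
  simp

lemma VAR_eq (ε : ℝ) (A : Finset (ι → Bool)) :
    VAR ε (indE A) =
      (∑ x : ι → Bool, (condProb ε A x - cprob A) ^ 2) / 2 ^ Fintype.card ι := by
  unfold VAR
  rw [cexpect_Qop_indE]
  unfold cexpect
  congr 1
  exact Finset.sum_congr rfl fun x _ => by simp only [Qop_indE]

lemma cprob_nonneg (A : Finset (ι → Bool)) : 0 ≤ cprob A := by
  unfold cprob; positivity

lemma cprob_le_one (A : Finset (ι → Bool)) : cprob A ≤ 1 := by
  unfold cprob
  rw [div_le_one (by positivity)]
  calc (A.card : ℝ) ≤ Fintype.card (ι → Bool) := by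
        exact_mod_cast Finset.card_le_univ A
    _ = 2 ^ Fintype.card ι := by
        rw [Fintype.card_fun]; simp

/-- (1/2) VAR(A, ε) ≤ φ(A, ε) ≤ VAR(A, ε)^{1/3}. -/
theorem var_le_gauge_le_var (n : ℕ) (A : Finset (Cube n))
    (ε : ℝ) (hε0 : 0 < ε) (hε1 : ε < 1) :
    VAR ε (indE A) / 2 ≤ gauge ε A ∧
      gauge ε A ≤ (VAR ε (indE A)) ^ ((1:ℝ)/3) := by
  set V := VAR ε (indE A) with hVdef
  set P := cprob A with hPdef
  set g := condProb ε A with hgdef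
  have hN : (0:ℝ) < 2 ^ Fintype.card (Fin n) := by positivity
  have hP0 : 0 ≤ P := cprob_nonneg A
  have hP1 : P ≤ 1 := cprob_le_one A
  have hg0 : ∀ x, 0 ≤ g x := condProb_nonneg hε0.le hε1.le A
  have hg1 : ∀ x, g x ≤ 1 := condProb_le_one hε0.le hε1.le A
  have hVsum : V = (∑ x : Cube n, (g x - P)^2) / 2 ^ Fintype.card (Fin n) := VAR_eq ε A
  have hptwise : ∀ x : Cube n, (g x - P)^2 ≤ 1 := fun x => by nlinarith [hg0 x, hg1 x]
  have hV0 : 0 ≤ V := by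
    rw [hVsum]; positivity
  have hV1 : V ≤ 1 := by
    rw [hVsum, div_le_one hN]
    calc ∑ x : Cube n, (g x - P)^2 ≤ ∑ _x : Cube n, (1:ℝ) :=
          Finset.sum_le_sum fun x _ => hptwise x
      _ = (Fintype.card (Cube n) : ℝ) := by simp
      _ = 2 ^ Fintype.card (Fin n) := by rw [Fintype.card_fun]; push_cast; simp
  -- the bad set
  set bad : ℝ → Finset (Cube n) := fun δ =>
    @Finset.filter _ (fun x => δ < |condProb ε A x - cprob A|)
      (Classical.decPred _) Finset.univ with hbad
  set S : Set ℝ := {δ : ℝ | 0 < δ ∧ cprob (bad δ) < δ} with hSdef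
  have hgauge : gauge ε A = sInf S := rfl
  have hmem_bad : ∀ δ (x : Cube n), x ∈ bad δ ↔ δ < |g x - P| := by
    intro δ x
    rw [hbad]
    simp [Finset.mem_filter]
    exact Iff.rfl
  have hcprob_bad : ∀ δ, cprob (bad δ) = ((bad δ).card : ℝ) / 2 ^ Fintype.card (Fin n) := fun δ => rfl
  -- Chebyshev
  have cheb : ∀ δ : ℝ, 0 < δ → δ^2 * cprob (bad δ) ≤ V := by
    intro δ hδ
    have key : δ^2 * ((bad δ).card : ℝ) ≤ ∑ x : Cube n, (g x - P)^2 := by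
      calc δ^2 * ((bad δ).card : ℝ) = ∑ _x ∈ bad δ, δ^2 := by
            rw [Finset.sum_const, nsmul_eq_mul]; ring
        _ ≤ ∑ x ∈ bad δ, (g x - P)^2 := by
            apply Finset.sum_le_sum
            intro x hx
            have h1 : δ < |g x - P| := (hmem_bad δ x).mp hx
            have h2 : δ^2 ≤ |g x - P|^2 := (pow_lt_pow_left₀ h1 hδ.le two_ne_zero).le
            rwa [sq_abs] at h2
        _ ≤ ∑ x : Cube n, (g x - P)^2 := by
            apply Finset.sum_le_sum_of_subset_of_nonneg
            · rw [hbad]; exact Finset.filter_subset _ _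
            · intro x _ _; positivity
    rw [hVsum, hcprob_bad, ← mul_div_assoc]
    exact div_le_div_of_nonneg_right key hN.le -- maybe wrong name
  -- given δ ∈ S, V ≤ δ + δ²
  have lowerB : ∀ δ : ℝ, δ ∈ S → V / 2 ≤ δ := by
    intro δ hδmem
    obtain ⟨hδ, hk⟩ := hδmem
    have hsplit : ∑ x : Cube n, (g x - P)^2 ≤
        ((bad δ).card : ℝ) + (2 ^ Fintype.card (Fin n) : ℝ) * δ^2 := by
      have h1 : ∑ x : Cube n, (g x - P)^2 ≤
          ∑ x : Cube n, ((if x ∈ bad δ then (1:ℝ) else 0) + δ^2) := by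
        apply Finset.sum_le_sum
        intro x _
        by_cases hx : x ∈ bad δ
        · simp only [hx, if_true]
          nlinarith [hptwise x, sq_nonneg δ]
        · simp only [hx, if_false, zero_add]
          have h2 : ¬ δ < |g x - P| := fun h => hx ((hmem_bad δ x).mpr h)
          push_neg at h2
          calc (g x - P)^2 = |g x - P|^2 := (sq_abs _).symm
            _ ≤ δ^2 := pow_le_pow_left₀ (abs_nonneg _) h2 2
      have h2 : ∑ x : Cube n, ((if x ∈ bad δ then (1:ℝ) else 0) + δ^2) =
          ((bad δ).card : ℝ) + (2 ^ Fintype.card (Fin n) : ℝ) * δ^2 := by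
        rw [Finset.sum_add_distrib, Finset.sum_ite_mem, Finset.univ_inter,
          Finset.sum_const, Finset.sum_const, nsmul_eq_mul, nsmul_eq_mul]
        congr 2
        · simp
        · rw [Finset.card_univ, Fintype.card_fun]; push_cast; simp
      linarith
    have hVle : V ≤ cprob (bad δ) + δ^2 := by
      rw [hVsum, hcprob_bad, div_add' _ _ _ hN.ne']
      apply div_le_div_of_nonneg_right _ hN.le
      linarith
    rcases le_or_gt δ 1 with h | h
    · nlinarith
    · linarith
  -- membership criterion
  set c : ℝ := V ^ ((1:ℝ)/3) with hcdef
  have hc0 : 0 ≤ c := Real.rpow_nonneg hV0 _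
  have hc3 : c^3 = V := by
    rw [hcdef, ← Real.rpow_natCast (V ^ ((1:ℝ)/3)) 3, ← Real.rpow_mul hV0]
    norm_num
  have memS : ∀ δ : ℝ, c < δ → δ ∈ S := by
    intro δ hcδ
    have hδ : 0 < δ := lt_of_le_of_lt hc0 hcδ
    refine ⟨hδ, ?_⟩
    have h1 : δ^2 * cprob (bad δ) ≤ V := cheb δ hδ
    have h2 : V < δ^3 := by
      rw [← hc3]
      exact pow_lt_pow_left₀ hcδ hc0 three_ne_zero
    have h3 : cprob (bad δ) * δ^2 < δ * δ^2 := by nlinarith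
    exact lt_of_mul_lt_mul_right h3 (sq_nonneg δ)
  have hSne : S.Nonempty := ⟨c + 1, memS _ (by linarith)⟩
  have hSbdd : BddBelow S := ⟨0, fun δ hδ => hδ.1.le⟩
  constructor
  · rw [hgauge]
    exact le_csInf hSne lowerB
  · rw [hgauge]
    calc sInf S ≤ sInf (Set.Ioi c) :=
          csInf_le_csInf hSbdd (Set.nonempty_Ioi) (fun δ hδ => memS δ hδ)
      _ = c := csInf_Ioi

end BKS
end
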